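/- Let x ∈ H_ℝ be a unit vector and let x^{⊗2n} ∈ K_n denote the simple tensor with all 2n factors equal to x. Then for all complex parameters q₊,q₋ and all n ≥ 0: ⟨x^{⊗2n}, P^{(n)}_{q₊,q₋} x^{⊗2n}⟩_{0,0} = ∏_{k=0}^{n−1} (1 + 2k·q₊ + q₋). -/

import Mathlib

open scoped ComplexOrder

noncomputable section

namespace TypeB

/-- The nontrivial orbits (cycles) of a permutation. -/
def ntOrbits {X : Type*} (σ : Equiv.Perm X) : Set (Set X) :=
  {O | ∃ i : X, σ i ≠ i ∧ O = {j | σ.SameCycle i j}}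

def negSet (B : Set ℤ) : Set ℤ := (fun x : ℤ => -x) '' B

def negOrbits (σ : Equiv.Perm ℤ) : Set (Set ℤ) := {O ∈ ntOrbits σ | negSet O = O}

def posOrbits (σ : Equiv.Perm ℤ) : Set (Set ℤ) := {O ∈ ntOrbits σ | negSet O ≠ O}

def expPlus (σ : Equiv.Perm ℤ) : ℕ :=
  (∑ᶠ O ∈ posOrbits σ, (O.ncard - 1)) / 2 + ∑ᶠ O ∈ negOrbits σ, (O.ncard / 2 - 1)

def negCount (σ : Equiv.Perm ℤ) : ℕ := (negOrbits σ).ncard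

def phi (qp qm : ℂ) (σ : Equiv.Perm ℤ) : ℂ := qp ^ expPlus σ * qm ^ negCount σ

def Bset (n : ℕ) : Set (Equiv.Perm ℤ) :=
  {σ | (∀ i : ℤ, σ (-i) = -σ i) ∧ ∀ i : ℤ, (n : ℤ) < |i| → σ i = i}

/-- The classification set of parameters (Theorem 1.1). -/
def ClassSet (qp qm : ℂ) : Prop :=
  (∃ (M N : ℕ) (ε : ℤ), (ε = 1 ∨ ε = -1) ∧ M + N ≠ 0 ∧
      qp = (ε : ℂ) / ((M : ℂ) + (N : ℂ)) ∧
      qm = ((M : ℂ) - (N : ℂ)) / ((M : ℂ) + (N : ℂ))) ∨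
  (qp = 0 ∧ ∃ r : ℝ, qm = (r : ℂ) ∧ -1 ≤ r ∧ r ≤ 1)

/-- The index set [±n] of the 2n tensor factors of K_n. -/
abbrev SIdx (n : ℕ) := {i : ℤ // i ≠ 0 ∧ |i| ≤ (n : ℤ)}

instance (n : ℕ) : Fintype (SIdx n) :=
  Fintype.subtype ((Finset.Icc (-(n : ℤ)) (n : ℤ)).erase 0)
    (by intro x; simp [Finset.mem_erase, Finset.mem_Icc, abs_le])

/-- H: the complexification of the real Hilbert space with orthonormal basis α. -/
abbrev Hsp (α : Type*) := α →₀ ℂ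

/-- K_n = H^{⊗2n}, with basis indexed by functions [±n] → α. -/
abbrev Ksp (α : Type*) (n : ℕ) := (SIdx n → α) →₀ ℂ

/-- The inner product of H (antilinear on the left). -/
def innerH {α : Type*} (x y : Hsp α) : ℂ :=
  y.sum fun a c => (starRingEnd ℂ) (x a) * c

/-- The free inner product ⟨·,·⟩₀,₀ on K_n (antilinear on the left); on simple tensors
it is the product of the inner products of the factors. -/
def inner00 {α : Type*} {n : ℕ} (F G : Ksp α n) : ℂ :=
  F.sum fun v c => (starRingEnd ℂ) c * G v

open Classical in
/-- The restriction of σ : Perm ℤ to [±n] (junk value 1 if σ does not preserve [±n];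
elements of B(n) do preserve it). -/
def permRestrict (n : ℕ) (σ : Equiv.Perm ℤ) : Equiv.Perm (SIdx n) :=
  if h : ∀ i : ℤ, (i ≠ 0 ∧ |i| ≤ (n : ℤ)) ↔ (σ i ≠ 0 ∧ |σ i| ≤ (n : ℤ)) then
    Equiv.Perm.subtypePerm σ (fun i => (h i).symm) else 1

/-- The action of σ ∈ B(n) on K_n permuting the tensor factors:
x_{−n}⊗…⊗x_n ↦ x_{σ(−n)}⊗…⊗x_{σ(n)}. -/
def act (α : Type*) [DecidableEq α] (n : ℕ) (σ : Equiv.Perm ℤ) :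
    Ksp α n →ₗ[ℂ] Ksp α n :=
  Finsupp.lmapDomain ℂ ℂ (fun v : SIdx n → α => v ∘ (permRestrict n σ))

/-- The type-B symmetrization operator P^{(n)}_{q₊,q₋} = Σ_{σ∈B(n)} φ_{q₊,q₋}(σ)·σ. -/
def Pop (α : Type*) [DecidableEq α] (n : ℕ) (qp qm : ℂ) : Ksp α n →ₗ[ℂ] Ksp α n :=
  ∑ᶠ σ ∈ Bset n, phi qp qm σ • act α n σ

/-- The deformed (semi-)inner product ⟨ξ,η⟩_{q₊,q₋} = ⟨ξ, P^{(n)} η⟩₀,₀ on K_n. -/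
def innerQ (α : Type*) [DecidableEq α] (n : ℕ) (qp qm : ℂ) (F G : Ksp α n) : ℂ :=
  inner00 F (Pop α n qp qm G)

/-- R^{(n)}_{q₊,q₋} = id + q₋·J_n⁻ + q₊·J_n⁺. -/
def Rop (α : Type*) [DecidableEq α] (n : ℕ) (qp qm : ℂ) : Ksp α n →ₗ[ℂ] Ksp α n :=
  LinearMap.id
    + qm • act α n (Equiv.swap (-(n : ℤ)) (n : ℤ))
    + qp • ∑ j ∈ (Finset.Icc (-(n : ℤ) + 1) ((n : ℤ) - 1)).erase 0,
        act α n (Equiv.swap j (n : ℤ) * Equiv.swap (-j) (-(n : ℤ)))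

/-- The inclusion [±n] ⊆ [±(n+1)]. -/
def castIdx {n : ℕ} (i : SIdx n) : SIdx (n + 1) :=
  ⟨i.1, i.2.1, i.2.2.trans (by push_cast; omega)⟩

/-- The position −(n+1) in [±(n+1)]. -/
def negEnd (n : ℕ) : SIdx (n + 1) :=
  ⟨-((n : ℤ) + 1), by refine ⟨by omega, ?_⟩; rw [abs_le]; constructor <;> omega⟩

/-- The position n+1 in [±(n+1)]. -/
def posEnd (n : ℕ) : SIdx (n + 1) :=
  ⟨(n : ℤ) + 1, by refine ⟨by omega, ?_⟩; rw [abs_le]; constructor <;> omega⟩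

/-- Restriction of a basis index of K_{n+1} to the middle factors [±n]. -/
def downFn {α : Type*} {n : ℕ} (v : SIdx (n + 1) → α) : SIdx n → α :=
  fun i => v (castIdx i)

open Classical in
/-- Extension of a basis index of K_n by values a at position −(n+1) and b at n+1. -/
def upFn {α : Type*} {n : ℕ} (w : SIdx n → α) (a b : α) : SIdx (n + 1) → α :=
  fun i => if h : i.1 ≠ 0 ∧ |i.1| ≤ (n : ℤ) then w ⟨i.1, h⟩
           else if i.1 < 0 then a else b

/-- id ⊗ T ⊗ id: the operator T on K_n acting on the middle 2n tensor factors of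
K_{n+1}, with the identity on the factors at positions −(n+1) and n+1. -/
def embedMid (α : Type*) [DecidableEq α] (n : ℕ) (T : Ksp α n →ₗ[ℂ] Ksp α n) :
    Ksp α (n + 1) →ₗ[ℂ] Ksp α (n + 1) :=
  Finsupp.lsum ℂ fun v : SIdx (n + 1) → α =>
    LinearMap.toSpanSingleton ℂ _
      (Finsupp.mapDomain (fun w : SIdx n → α => upFn w (v (negEnd n)) (v (posEnd n)))
        (T (Finsupp.single (downFn v) 1)))

/-- The left-right creation operator b*(x⊗y) : K_n → K_{n+1}: it tensors x at the
leftmost position −(n+1) and y at the rightmost position n+1. -/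
def bstar (α : Type*) [DecidableEq α] (n : ℕ) (x y : Hsp α) :
    Ksp α n →ₗ[ℂ] Ksp α (n + 1) :=
  Finsupp.lsum ℂ fun w : SIdx n → α =>
    LinearMap.toSpanSingleton ℂ _
      (x.sum fun a xa => y.sum fun b yb => Finsupp.single (upFn w a b) (xa * yb))

/-- The free annihilation operator b(x⊗y) : K_{n+1} → K_n, the ⟨·,·⟩₀,₀-adjoint of
b*(x⊗y):  x_{−(n+1)}⊗…⊗x_{n+1} ↦ ⟨x,x_{−(n+1)}⟩⟨y,x_{n+1}⟩·x_{−n}⊗…⊗x_n. -/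
def bfree (α : Type*) [DecidableEq α] (n : ℕ) (x y : Hsp α) :
    Ksp α (n + 1) →ₗ[ℂ] Ksp α n :=
  Finsupp.lsum ℂ fun v : SIdx (n + 1) → α =>
    LinearMap.toSpanSingleton ℂ _
      (((starRingEnd ℂ) (x (v (negEnd n))) * (starRingEnd ℂ) (y (v (posEnd n)))) •
        Finsupp.single (downFn v) (1 : ℂ))



/-- The canonical embedding H_ℝ → H of the real Hilbert space into its
complexification. -/
def cplx {α : Type*} (x : α →₀ ℝ) : Hsp α :=
  x.mapRange Complex.ofReal (by simp)

/-- The simple tensor x^{⊗2n} ∈ K_n with all 2n factors equal to x. -/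
def tpow (α : Type*) [DecidableEq α] (x : Hsp α) (n : ℕ) : Ksp α n :=
  ∑ v ∈ Fintype.piFinset (fun _ : SIdx n => x.support),
    Finsupp.single v (∏ i : SIdx n, x (v i))

open Equiv

section Toolkit
variable {X : Type*}

lemma perm_apply_inv_self (σ : Perm X) (x : X) : σ (σ⁻¹ x) = x := σ.apply_symm_apply x

def orb (σ : Perm X) (i : X) : Set X := {j | σ.SameCycle i j}

lemma mem_orb {σ : Perm X} {i j : X} : j ∈ orb σ i ↔ σ.SameCycle i j := Iff.rfl

lemma mem_orb_self (σ : Perm X) (i : X) : i ∈ orb σ i := Equiv.Perm.SameCycle.refl σ i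

lemma apply_mem_orb {σ : Perm X} {i j : X} (h : j ∈ orb σ i) : σ j ∈ orb σ i :=
  Equiv.Perm.sameCycle_apply_right.2 h

lemma orb_eq_of_mem {σ : Perm X} {i j : X} (h : j ∈ orb σ i) : orb σ j = orb σ i := by
  ext k
  exact ⟨fun hk => h.trans hk, fun hk => h.symm.trans hk⟩

lemma not_fixed_of_mem_orb {σ : Perm X} {i j : X} (hi : σ i ≠ i) (h : j ∈ orb σ i) :
    σ j ≠ j := fun hj => hi (h.apply_eq_self_iff.2 hj)

lemma exists_nat_pow {σ : Perm X} (hσ : IsOfFinOrder σ) {i j : X} (h : σ.SameCycle i j) :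
    ∃ k : ℕ, (σ ^ k) i = j := by
  obtain ⟨z, hz⟩ := h
  obtain ⟨m, hm, hm1⟩ := isOfFinOrder_iff_pow_eq_one.1 hσ
  refine ⟨(z % m).toNat, ?_⟩
  have h0 : (0:ℤ) ≤ z % (m:ℤ) := Int.emod_nonneg z (by exact_mod_cast hm.ne')
  have hkey : σ ^ (((z % (m:ℤ)).toNat : ℤ)) = σ ^ z := by
    rw [Int.toNat_of_nonneg h0]
    conv_rhs => rw [← Int.emod_add_mul_ediv z (m:ℤ)]
    rw [zpow_add, zpow_mul]
    have : σ ^ (m:ℤ) = 1 := by rw [zpow_natCast, hm1]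
    simp [this]
  rw [← zpow_natCast, hkey]; exact hz

lemma pow_mem_of_inv {σ : Perm X} {S : Set X} (hS : ∀ j ∈ S, σ j ∈ S) {i : X} (hi : i ∈ S) :
    ∀ k : ℕ, (σ ^ k) i ∈ S := by
  intro k
  induction k with
  | zero => simpa using hi
  | succ k ih => rw [pow_succ', Equiv.Perm.mul_apply]; exact hS _ ih

lemma orb_subset_of_inv {σ : Perm X} (hσ : IsOfFinOrder σ) {i : X} {S : Set X}
    (hi : i ∈ S) (hS : ∀ j ∈ S, σ j ∈ S) : orb σ i ⊆ S := by
  intro j hj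
  obtain ⟨k, rfl⟩ := exists_nat_pow hσ hj
  exact pow_mem_of_inv hS hi k

lemma pow_eq_of_eqOn {σ τ : Perm X} {S : Set X}
    (hagree : ∀ j ∈ S, σ j = τ j) (hσS : ∀ j ∈ S, σ j ∈ S) {i : X} (hi : i ∈ S) :
    ∀ k : ℕ, (σ ^ k) i = (τ ^ k) i ∧ (σ ^ k) i ∈ S := by
  intro k
  induction k with
  | zero => simpa using hi
  | succ k ih =>
      rw [pow_succ', pow_succ', Equiv.Perm.mul_apply, Equiv.Perm.mul_apply]
      refine ⟨?_, hσS _ ih.2⟩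
      rw [← ih.1]
      exact hagree _ ih.2

lemma orb_eq_of_eqOn {σ τ : Perm X} (hσ : IsOfFinOrder σ) (hτ : IsOfFinOrder τ) {S : Set X}
    (hagree : ∀ j ∈ S, σ j = τ j) (hσS : ∀ j ∈ S, σ j ∈ S) (hτS : ∀ j ∈ S, τ j ∈ S)
    {i : X} (hi : i ∈ S) : orb σ i = orb τ i := by
  have hagree' : ∀ j ∈ S, τ j = σ j := fun j hj => (hagree j hj).symm
  apply subset_antisymm
  · intro j hj
    obtain ⟨k, rfl⟩ := exists_nat_pow hσ hj
    rw [(pow_eq_of_eqOn hagree hσS hi k).1]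
    exact ⟨(k:ℤ), by rw [zpow_natCast]⟩
  · intro j hj
    obtain ⟨k, rfl⟩ := exists_nat_pow hτ hj
    rw [(pow_eq_of_eqOn hagree' hτS hi k).1]
    exact ⟨(k:ℤ), by rw [zpow_natCast]⟩

lemma mem_ntOrbits {σ : Perm X} {O : Set X} :
    O ∈ ntOrbits σ ↔ ∃ i, σ i ≠ i ∧ O = orb σ i := Iff.rfl

lemma not_mem_of_fixed {σ : Perm X} {j : X} (hj : σ j = j) {O : Set X}
    (hO : O ∈ ntOrbits σ) : j ∉ O := by
  obtain ⟨i, hi, rfl⟩ := hO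
  exact fun hmem => (not_fixed_of_mem_orb hi hmem) hj

lemma orb_subset_support {σ : Perm X} {i : X} (hi : σ i ≠ i) :
    orb σ i ⊆ {j | σ j ≠ j} := fun _ hj => not_fixed_of_mem_orb hi hj

lemma ntOrbits_finite {σ : Perm X} (h : {j | σ j ≠ j}.Finite) : (ntOrbits σ).Finite :=
  h.finite_subsets.subset (by rintro O ⟨i, hi, rfl⟩; exact orb_subset_support hi)

lemma orb_finite {σ : Perm X} (h : {j | σ j ≠ j}.Finite) {i : X} (hi : σ i ≠ i) :
    (orb σ i).Finite := h.subset (orb_subset_support hi)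

lemma ntOrbit_finite {σ : Perm X} (h : {j | σ j ≠ j}.Finite) {O : Set X}
    (hO : O ∈ ntOrbits σ) : O.Finite := by
  obtain ⟨i, hi, rfl⟩ := hO; exact orb_finite h hi

end Toolkit

section NegLemmas

lemma mem_negSet {B : Set ℤ} {x : ℤ} : x ∈ negSet B ↔ -x ∈ B := by
  constructor
  · rintro ⟨y, hy, rfl⟩; simpa using hy
  · intro h; exact ⟨-x, h, by ring⟩

lemma negSet_negSet {B : Set ℤ} : negSet (negSet B) = B := by
  ext x; simp [mem_negSet]

lemma negSet_insert {B : Set ℤ} {a : ℤ} : negSet (insert a B) = insert (-a) (negSet B) :=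
  Set.image_insert_eq

lemma negSet_pair {a b : ℤ} : negSet {a, b} = ({-a, -b} : Set ℤ) := by
  simp [negSet, Set.image_insert_eq]

variable {σ : Equiv.Perm ℤ}

lemma odd_inv (hodd : ∀ i : ℤ, σ (-i) = -σ i) : ∀ i : ℤ, σ⁻¹ (-i) = -σ⁻¹ i := by
  intro i
  apply σ.injective
  rw [perm_apply_inv_self, hodd, perm_apply_inv_self]

lemma odd_pow (hodd : ∀ i : ℤ, σ (-i) = -σ i) : ∀ (k : ℕ) (i : ℤ), (σ ^ k) (-i) = -(σ ^ k) i := by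
  intro k
  induction k with
  | zero => simp
  | succ k ih =>
      intro i
      rw [pow_succ', Equiv.Perm.mul_apply, Equiv.Perm.mul_apply, ih, hodd]

lemma odd_zpow (hodd : ∀ i : ℤ, σ (-i) = -σ i) : ∀ (z : ℤ) (i : ℤ), (σ ^ z) (-i) = -(σ ^ z) i := by
  intro z i
  cases z with
  | ofNat k => rw [Int.ofNat_eq_coe, zpow_natCast]; exact odd_pow hodd k i
  | negSucc k =>
      rw [zpow_negSucc]
      have := odd_pow hodd (k+1)
      have hinv : ∀ j : ℤ, ((σ ^ (k+1))⁻¹) (-j) = -((σ ^ (k+1))⁻¹) j := odd_inv this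
      exact hinv i

lemma sameCycle_neg (hodd : ∀ i : ℤ, σ (-i) = -σ i) {i j : ℤ} (h : σ.SameCycle i j) :
    σ.SameCycle (-i) (-j) := by
  obtain ⟨z, hz⟩ := h
  exact ⟨z, by rw [odd_zpow hodd, hz]⟩

lemma negSet_orb (hodd : ∀ i : ℤ, σ (-i) = -σ i) (i : ℤ) :
    negSet (orb σ i) = orb σ (-i) := by
  ext j
  simp only [mem_negSet, mem_orb]
  constructor
  · intro h
    simpa using sameCycle_neg hodd h
  · intro h
    simpa using sameCycle_neg hodd h

end NegLemmas



section BsetLemmas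
variable {n : ℕ} {σ : Equiv.Perm ℤ}

lemma bset_zero (h : σ ∈ Bset n) : σ 0 = 0 := by
  have := h.1 0
  simp only [neg_zero] at this
  omega

lemma bset_fix (h : σ ∈ Bset n) {i : ℤ} (hi : (n:ℤ) < |i|) : σ i = i := h.2 i hi

lemma bset_ne_zero (h : σ ∈ Bset n) {i : ℤ} (hi : i ≠ 0) : σ i ≠ 0 := by
  intro h0
  exact hi (σ.injective (h0.trans (bset_zero h).symm))

lemma bset_abs_le (h : σ ∈ Bset n) {i : ℤ} (hi : |i| ≤ (n:ℤ)) : |σ i| ≤ (n:ℤ) := by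
  by_contra hgt
  push_neg at hgt
  have h1 : σ (σ i) = σ i := h.2 _ hgt
  have h2 : σ i = i := σ.injective h1
  rw [h2] at hgt
  omega

lemma bset_cond (h : σ ∈ Bset n) :
    ∀ i : ℤ, (i ≠ 0 ∧ |i| ≤ (n:ℤ)) ↔ (σ i ≠ 0 ∧ |σ i| ≤ (n:ℤ)) := by
  intro i
  constructor
  · rintro ⟨h1, h2⟩; exact ⟨bset_ne_zero h h1, bset_abs_le h h2⟩
  · rintro ⟨h1, h2⟩
    constructor
    · intro h0; subst h0; exact h1 (bset_zero h)
    · by_contra hgt; push_neg at hgt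
      rw [h.2 i hgt] at h2; omega

lemma bset_eq_ofSubtype (h : σ ∈ Bset n) :
    Equiv.Perm.ofSubtype (σ.subtypePerm (p := fun i : ℤ => i ≠ 0 ∧ |i| ≤ (n:ℤ)) (fun i => (bset_cond h i).symm)) = σ :=
  Equiv.Perm.ofSubtype_subtypePerm _ (fun i hi => by
    by_contra hc
    push_neg at hc
    rcases em (i = 0) with rfl | h0
    · exact hi (bset_zero h)
    · exact hi (h.2 i (by have := hc h0; omega)))

lemma bset_finite (n : ℕ) : (Bset n).Finite := by
  have : Bset n ⊆ Set.range (Equiv.Perm.ofSubtype :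
      Equiv.Perm (SIdx n) → Equiv.Perm ℤ) := by
    intro σ hσ
    exact ⟨_, bset_eq_ofSubtype hσ⟩
  exact (Set.finite_range _).subset this

lemma bset_finOrder (h : σ ∈ Bset n) : IsOfFinOrder σ := by
  rw [← bset_eq_ofSubtype h]
  exact MonoidHom.isOfFinOrder _ (isOfFinOrder_of_finite _)

lemma bset_supp_finite (h : σ ∈ Bset n) : {j : ℤ | σ j ≠ j}.Finite := by
  apply (Set.finite_Icc (-(n:ℤ)) (n:ℤ)).subset
  intro j hj
  simp only [Set.mem_setOf_eq] at hj
  have : ¬ ((n:ℤ) < |j|) := fun hc => hj (h.2 j hc)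
  rw [not_lt, abs_le] at this
  simpa [Set.mem_Icc] using this

end BsetLemmas

section TT

def tt (m b : ℤ) : Equiv.Perm ℤ :=
  if b = -m then Equiv.swap m (-m) else Equiv.swap b m * Equiv.swap (-b) (-m)

variable {m b : ℤ} (hb : b ≠ 0) (hm : 0 < m)

lemma tt_apply (hb : b ≠ 0) (hm : 0 < m) (i : ℤ) :
    tt m b i = if i = b then m else if i = -b then -m
      else if i = m then b else if i = -m then -b else i := by
  by_cases h : b = -m
  · rw [tt, if_pos h]
    simp only [Equiv.swap_apply_def]
    split_ifs <;> omega
  · rw [tt, if_neg h]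
    simp only [Equiv.Perm.mul_apply, Equiv.swap_apply_def]
    split_ifs <;> omega

lemma tt_invol (hb : b ≠ 0) (hm : 0 < m) : tt m b * tt m b = 1 := by
  ext i
  simp only [Equiv.Perm.mul_apply, Equiv.Perm.one_apply, tt_apply hb hm]
  split_ifs <;> omega

lemma tt_odd (hb : b ≠ 0) (hm : 0 < m) (i : ℤ) : tt m b (-i) = -(tt m b i) := by
  rw [tt_apply hb hm, tt_apply hb hm]
  split_ifs <;> omega

def ins (m : ℤ) (σ : Equiv.Perm ℤ) (b : ℤ) : Equiv.Perm ℤ := σ * tt m b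

lemma ins_apply (σ : Equiv.Perm ℤ) (i : ℤ) : ins m σ b i = σ (tt m b i) := rfl

end TT

section InsLemmas
variable {n : ℕ} {σ' : Equiv.Perm ℤ} {b : ℤ}

local notation "m" => ((n:ℤ)+1)

lemma ins_mem_Bset (hσ : σ' ∈ Bset n) (hb : b ≠ 0) (hbm : |b| ≤ m) :
    ins m σ' b ∈ Bset (n+1) := by
  have hm : (0:ℤ) < m := by positivity
  obtain ⟨hb1, hb2⟩ := abs_le.1 hbm
  constructor
  · intro i
    rw [ins_apply, ins_apply, tt_odd hb hm, hσ.1]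
  · intro i hi
    push_cast at hi
    have h1 : tt m b i = i := by
      rw [tt_apply hb hm]
      rcases abs_cases i with ⟨he, _⟩ | ⟨he, _⟩ <;> (split_ifs <;> omega)
    rw [ins_apply, h1]
    refine hσ.2 i (by omega)

lemma ins_apply_b (hσ : σ' ∈ Bset n) (hb : b ≠ 0) : ins m σ' b b = m := by
  have hm : (0:ℤ) < m := by positivity
  rw [ins_apply, tt_apply hb hm, if_pos rfl]
  exact hσ.2 _ (by rw [abs_of_pos hm]; omega)

lemma ins_apply_negb (hσ : σ' ∈ Bset n) (hb : b ≠ 0) : ins m σ' b (-b) = -m := by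
  have hm : (0:ℤ) < m := by positivity
  rw [ins_apply, tt_apply hb hm, if_neg (by omega), if_pos rfl]
  exact hσ.2 _ (by rw [abs_neg, abs_of_pos hm]; omega)

lemma ins_apply_m (hσ : σ' ∈ Bset n) (hb : b ≠ 0) : ins m σ' b m = σ' b := by
  have hm : (0:ℤ) < m := by positivity
  have hfm : σ' m = m := hσ.2 _ (by rw [abs_of_pos hm]; omega)
  have hfnm : σ' (-m) = -m := hσ.2 _ (by rw [abs_neg, abs_of_pos hm]; omega)
  rw [ins_apply, tt_apply hb hm]
  split_ifs with h1 h2 h3 h4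
  · rw [← h1]
  · rw [(show b = -((n:ℤ)+1) by omega)]
  · rfl
  · omega
  · omega

lemma ins_apply_negm (hσ : σ' ∈ Bset n) (hb : b ≠ 0) : ins m σ' b (-m) = σ' (-b) := by
  have hm : (0:ℤ) < m := by positivity
  have hfm : σ' m = m := hσ.2 _ (by rw [abs_of_pos hm]; omega)
  have hfnm : σ' (-m) = -m := hσ.2 _ (by rw [abs_neg, abs_of_pos hm]; omega)
  rw [ins_apply, tt_apply hb hm]
  split_ifs with h1 h2 h3 h4
  · rw [(show -b = ((n:ℤ)+1) by omega)]
  · rw [(show -b = -((n:ℤ)+1) by omega)]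
  · omega
  · rfl
  · omega

lemma ins_apply_other (hb : b ≠ 0) {i : ℤ}
    (hi1 : i ≠ b) (hi2 : i ≠ -b) (hi3 : i ≠ m) (hi4 : i ≠ -m) :
    ins m σ' b i = σ' i := by
  have hm : (0:ℤ) < m := by positivity
  rw [ins_apply, tt_apply hb hm, if_neg hi1, if_neg hi2, if_neg hi3, if_neg hi4]

end InsLemmas

section DelLemmas
variable {n : ℕ} {σ : Equiv.Perm ℤ}

local notation "m" => ((n:ℤ)+1)

lemma del_b_ne_zero (hσ : σ ∈ Bset (n+1)) : σ⁻¹ m ≠ 0 := by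
  intro h0
  have h1 : σ (σ⁻¹ m) = m := perm_apply_inv_self σ m
  rw [h0, bset_zero hσ] at h1
  omega

lemma del_b_abs_le (hσ : σ ∈ Bset (n+1)) : |σ⁻¹ m| ≤ m := by
  by_contra hgt
  push_neg at hgt
  have h1 : σ (σ⁻¹ m) = σ⁻¹ m := hσ.2 _ (by push_cast; exact hgt)
  rw [perm_apply_inv_self] at h1
  rw [← h1, abs_of_pos (by positivity : (0:ℤ) < m)] at hgt
  omega

lemma del_mem_Bset (hσ : σ ∈ Bset (n+1)) : σ * tt m (σ⁻¹ m) ∈ Bset n := by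
  set b := σ⁻¹ m with hbdef
  have hσb : σ b = m := perm_apply_inv_self σ m
  have hb : b ≠ 0 := del_b_ne_zero hσ
  have hbm : |b| ≤ m := del_b_abs_le hσ
  obtain ⟨hb1, hb2⟩ := abs_le.1 hbm
  have hm : (0:ℤ) < m := by positivity
  have hodd : ∀ i : ℤ, (σ * tt m b) (-i) = -((σ * tt m b) i) := by
    intro i
    rw [Equiv.Perm.mul_apply, Equiv.Perm.mul_apply, tt_odd hb hm, hσ.1]
  refine ⟨hodd, ?_⟩
  have hfixm : (σ * tt m b) m = m := by
    rw [Equiv.Perm.mul_apply, tt_apply hb hm]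
    by_cases h1 : b = m
    · rw [if_pos h1.symm, ← h1, hσb]; omega
    · by_cases h2 : b = -m
      · rw [if_neg (by omega), if_pos (by omega), ← h2, hσb]
      · rw [if_neg (by omega), if_neg (by omega), if_pos rfl, hσb]
  intro i hi
  push_cast at hi
  rcases (by rcases abs_cases i with ⟨he, _⟩ | ⟨he, _⟩ <;> omega :
      i = m ∨ i = -m ∨ m < |i|) with rfl | rfl | habs
  · exact hfixm
  · rw [hodd, hfixm]
  · rw [Equiv.Perm.mul_apply, tt_apply hb hm]
    have h1 : (if i = b then m else if i = -b then -m
        else if i = m then b else if i = -m then -b else i) = i := by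
      rcases abs_cases i with ⟨he, _⟩ | ⟨he, _⟩ <;> (split_ifs <;> omega)
    rw [h1]
    exact hσ.2 i (by push_cast; omega)

lemma ins_del (hσ : σ ∈ Bset (n+1)) : ins m (σ * tt m (σ⁻¹ m)) (σ⁻¹ m) = σ := by
  rw [ins, mul_assoc, tt_invol (del_b_ne_zero hσ) (by positivity), mul_one]

end DelLemmas

section DelIns
variable {n : ℕ} {σ' : Equiv.Perm ℤ} {b : ℤ}

local notation "m" => ((n:ℤ)+1)

lemma ins_inv_m (hσ : σ' ∈ Bset n) (hb : b ≠ 0) : (ins m σ' b)⁻¹ m = b := by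
  have h := ins_apply_b hσ hb
  refine (ins m σ' b).injective ?_
  rw [perm_apply_inv_self, h]

lemma del_ins (hb : b ≠ 0) : ins m σ' b * tt m b = σ' := by
  rw [ins, mul_assoc, tt_invol hb (by positivity), mul_one]

end DelIns



section Toolkit2
variable {X : Type*}

lemma orb_eq_of_agree_orbit {σ τ : Equiv.Perm X} (hσ : IsOfFinOrder σ) (hτ : IsOfFinOrder τ)
    {i : X} (hagree : ∀ j ∈ orb τ i, σ j = τ j) : orb σ i = orb τ i :=
  orb_eq_of_eqOn hσ hτ hagree
    (fun j hj => by rw [hagree j hj]; exact apply_mem_orb hj)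
    (fun j hj => apply_mem_orb hj) (mem_orb_self τ i)

lemma subset_orb_of_step {σ τ : Equiv.Perm X} (hτ : IsOfFinOrder τ) {b : X}
    (hstep : ∀ j, τ.SameCycle b j → σ.SameCycle b j → σ.SameCycle b (τ j)) :
    orb τ b ⊆ orb σ b := by
  intro j hj
  obtain ⟨k, rfl⟩ := exists_nat_pow hτ hj
  clear hj
  induction k with
  | zero => simpa using mem_orb_self σ b
  | succ k ih =>
      rw [pow_succ', Equiv.Perm.mul_apply]
      exact hstep _ ⟨(k:ℤ), by rw [zpow_natCast]⟩ ih

lemma finsum_mem_remove {M : Type*} [AddCommMonoid M] {s : Set X} (hs : s.Finite) {A : X}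
    (hA : A ∈ s) (f : X → M) : ∑ᶠ i ∈ s, f i = f A + ∑ᶠ i ∈ s \ {A}, f i := by
  have h1 : s = insert A (s \ {A}) := by
    rw [Set.insert_diff_singleton, Set.insert_eq_of_mem hA]
  conv_lhs => rw [h1]
  exact finsum_mem_insert f (by simp) (hs.subset Set.diff_subset)

lemma ncard_remove {s : Set X} (hs : s.Finite) {A : X} (hA : A ∈ s) :
    s.ncard = (s \ {A}).ncard + 1 := by
  have h1 : s = insert A (s \ {A}) := by
    rw [Set.insert_diff_singleton, Set.insert_eq_of_mem hA]
  conv_lhs => rw [h1]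
  exact Set.ncard_insert_of_notMem (by simp) (hs.subset Set.diff_subset)

end Toolkit2

lemma negSet_union {A B : Set ℤ} : negSet (A ∪ B) = negSet A ∪ negSet B :=
  Set.image_union _ A B

lemma negSet_singleton {a : ℤ} : negSet {a} = {-a} := Set.image_singleton

lemma phi_one (qp qm : ℂ) : phi qp qm 1 = 1 := by
  have hnt : ntOrbits (1 : Equiv.Perm ℤ) = ∅ := by
    ext O
    simp only [ntOrbits, Set.mem_setOf_eq, Set.mem_empty_iff_false, iff_false]
    rintro ⟨i, hi, -⟩
    exact hi rfl
  have hpos : posOrbits (1 : Equiv.Perm ℤ) = ∅ := by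
    rw [posOrbits, hnt]; ext O; simp
  have hneg : negOrbits (1 : Equiv.Perm ℤ) = ∅ := by
    rw [negOrbits, hnt]; ext O; simp
  rw [phi, expPlus, negCount, hpos, hneg]
  simp [finsum_mem_empty]

section PhiCases
variable {n : ℕ} {σ' : Equiv.Perm ℤ}

local notation "m" => ((n:ℤ)+1)

lemma tt_m_one : tt m m = 1 := by
  ext i
  rw [tt_apply (by positivity) (by positivity), Equiv.Perm.one_apply]
  split_ifs <;> omega

lemma ins_m_eq (σ' : Equiv.Perm ℤ) : ins m σ' m = σ' := by
  rw [ins, tt_m_one, mul_one]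

lemma phi_ins_m (qp qm : ℂ) : phi qp qm (ins m σ' m) = phi qp qm σ' := by
  rw [ins_m_eq]

lemma phi_ins_negm (hσ : σ' ∈ Bset n) (qp qm : ℂ) :
    phi qp qm (ins m σ' (-m)) = qm * phi qp qm σ' := by
  have hm : (0:ℤ) < m := by positivity
  have hb : (-m : ℤ) ≠ 0 := by omega
  have hbm : |(-m : ℤ)| ≤ m := by rw [abs_neg, abs_of_pos hm]
  set σ : Equiv.Perm ℤ := ins m σ' (-m) with hσdef
  have hσm : σ ∈ Bset (n+1) := ins_mem_Bset hσ hb hbm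
  have fo : IsOfFinOrder σ := bset_finOrder hσm
  have fo' : IsOfFinOrder σ' := bset_finOrder hσ
  have hfm : σ' m = m := hσ.2 _ (by rw [abs_of_pos hm]; omega)
  have hfnm : σ' (-m) = -m := hσ.2 _ (by rw [abs_neg, abs_of_pos hm]; omega)
  have happm : σ m = -m := by rw [hσdef, ins_apply_m hσ hb, hfnm]
  have happnm : σ (-m) = m := ins_apply_b hσ hb
  have hother : ∀ i : ℤ, i ≠ m → i ≠ -m → σ i = σ' i := by
    intro i h1 h2
    exact ins_apply_other hb h2 (by omega) h1 h2
  have horbm : orb σ m = ({m, -m} : Set ℤ) := by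
    apply subset_antisymm
    · apply orb_subset_of_inv fo (by simp)
      rintro j (rfl | hj)
      · rw [happm]; simp
      · rw [Set.mem_singleton_iff] at hj
        subst hj
        rw [happnm]; simp
    · rintro j (rfl | hj)
      · exact mem_orb_self σ m
      · rw [Set.mem_singleton_iff] at hj
        subst hj
        rw [← happm]
        exact apply_mem_orb (mem_orb_self σ m)
  have horbnm : orb σ (-m) = ({m, -m} : Set ℤ) := by
    rw [orb_eq_of_mem (show -m ∈ orb σ m by rw [horbm]; simp), horbm]
  have huntouched : ∀ i : ℤ, i ≠ m → i ≠ -m → σ' i ≠ i → orb σ i = orb σ' i := by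
    intro i h1 h2 hne
    apply orb_eq_of_agree_orbit fo fo'
    intro j hj
    have hjne : σ' j ≠ j := not_fixed_of_mem_orb hne hj
    exact hother j (fun h => hjne (h ▸ hfm)) (fun h => hjne (h ▸ hfnm))
  have hnt : ntOrbits σ = insert ({m, -m} : Set ℤ) (ntOrbits σ') := by
    ext O
    constructor
    · rintro ⟨i, hi, rfl⟩
      show orb σ i ∈ _
      by_cases h1 : i = m
      · subst h1; rw [horbm]; exact Set.mem_insert _ _
      · by_cases h2 : i = -m
        · subst h2; rw [horbnm]; exact Set.mem_insert _ _
        · have hne : σ' i ≠ i := by rw [← hother i h1 h2]; exact hi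
          rw [huntouched i h1 h2 hne]
          exact Set.mem_insert_of_mem _ ⟨i, hne, rfl⟩
    · rintro (rfl | ⟨i, hi, rfl⟩)
      · exact ⟨m, by rw [happm]; omega, horbm.symm⟩
      · have h1 : i ≠ m := fun h => hi (h ▸ hfm)
        have h2 : i ≠ -m := fun h => hi (h ▸ hfnm)
        refine ⟨i, by rw [hother i h1 h2]; exact hi, (huntouched i h1 h2 hi).symm⟩
  have hApair : negSet ({m, -m} : Set ℤ) = ({m, -m} : Set ℤ) := by
    rw [negSet_pair]
    ext x; simp only [Set.mem_insert_iff, Set.mem_singleton_iff]; omega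
  have hAnotmem : ({m, -m} : Set ℤ) ∉ ntOrbits σ' :=
    fun h => not_mem_of_fixed hfm h (Set.mem_insert _ _)
  have hpos : posOrbits σ = posOrbits σ' := by
    rw [posOrbits, posOrbits, hnt]
    ext O
    simp only [Set.mem_setOf_eq, Set.mem_insert_iff]
    constructor
    · rintro ⟨rfl | hO, hne⟩
      · exact absurd hApair hne
      · exact ⟨hO, hne⟩
    · rintro ⟨hO, hne⟩
      exact ⟨Or.inr hO, hne⟩
  have hneg : negOrbits σ = insert ({m, -m} : Set ℤ) (negOrbits σ') := by
    rw [negOrbits, negOrbits, hnt]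
    ext O
    simp only [Set.mem_setOf_eq, Set.mem_insert_iff]
    constructor
    · rintro ⟨rfl | hO, hne⟩
      · exact Or.inl rfl
      · exact Or.inr ⟨hO, hne⟩
    · rintro (rfl | ⟨hO, hne⟩)
      · exact ⟨Or.inl rfl, hApair⟩
      · exact ⟨Or.inr hO, hne⟩
  have hnegfin' : (negOrbits σ').Finite :=
    (ntOrbits_finite (bset_supp_finite hσ)).subset (fun O hO => hO.1)
  have hAnotneg : ({m, -m} : Set ℤ) ∉ negOrbits σ' := fun h => hAnotmem h.1
  have hexp : expPlus σ = expPlus σ' := by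
    rw [expPlus, expPlus, hpos, hneg, finsum_mem_insert _ hAnotneg hnegfin']
    have h2 : ({m, -m} : Set ℤ).ncard = 2 := Set.ncard_pair (by omega)
    rw [h2]
    norm_num
  have hcount : negCount σ = negCount σ' + 1 := by
    rw [negCount, negCount, hneg, Set.ncard_insert_of_notMem hAnotneg hnegfin']
  rw [phi, phi, hexp, hcount, pow_succ]
  ring

end PhiCases
section PhiCases2
variable {n : ℕ} {σ' : Equiv.Perm ℤ}

local notation "m" => ((n:ℤ)+1)

lemma phi_ins_fix (hσ : σ' ∈ Bset n) {b : ℤ} (hb : b ≠ 0) (hbn : |b| ≤ (n:ℤ))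
    (hfix : σ' b = b) (qp qm : ℂ) :
    phi qp qm (ins m σ' b) = qp * phi qp qm σ' := by
  have hm : (0:ℤ) < m := by positivity
  obtain ⟨hb1, hb2⟩ := abs_le.1 hbn
  have hbm : |b| ≤ m := by rw [abs_le]; omega
  set σ : Equiv.Perm ℤ := ins m σ' b with hσdef
  have hσm : σ ∈ Bset (n+1) := ins_mem_Bset hσ hb hbm
  have fo : IsOfFinOrder σ := bset_finOrder hσm
  have fo' : IsOfFinOrder σ' := bset_finOrder hσ
  have hodd : ∀ i : ℤ, σ (-i) = -σ i := hσm.1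
  have hfm : σ' m = m := hσ.2 _ (by rw [abs_of_pos hm]; omega)
  have hfnm : σ' (-m) = -m := hσ.2 _ (by rw [abs_neg, abs_of_pos hm]; omega)
  have hfixneg : σ' (-b) = -b := by rw [hσ.1, hfix]
  have happb : σ b = m := ins_apply_b hσ hb
  have happm : σ m = b := by rw [hσdef, ins_apply_m hσ hb, hfix]
  have happnb : σ (-b) = -m := ins_apply_negb hσ hb
  have happnm : σ (-m) = -b := by rw [hσdef, ins_apply_negm hσ hb, hfixneg]
  have hother : ∀ i : ℤ, i ≠ b → i ≠ -b → i ≠ m → i ≠ -m → σ i = σ' i :=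
    fun i h1 h2 h3 h4 => ins_apply_other hb h1 h2 h3 h4
  have horb1 : orb σ b = ({b, m} : Set ℤ) := by
    apply subset_antisymm
    · apply orb_subset_of_inv fo (by simp)
      rintro j (rfl | hj)
      · rw [happb]; simp
      · rw [Set.mem_singleton_iff] at hj
        subst hj
        rw [happm]; simp
    · rintro j (rfl | hj)
      · exact mem_orb_self σ _
      · rw [Set.mem_singleton_iff] at hj
        subst hj
        rw [← happb]
        exact apply_mem_orb (mem_orb_self σ b)
  have horbm : orb σ m = ({b, m} : Set ℤ) := by
    rw [orb_eq_of_mem (show m ∈ orb σ b by rw [horb1]; simp), horb1]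
  have horb2 : orb σ (-b) = ({-b, -m} : Set ℤ) := by
    rw [← negSet_orb hodd, horb1, negSet_pair]
  have horbnm : orb σ (-m) = ({-b, -m} : Set ℤ) := by
    rw [orb_eq_of_mem (show -m ∈ orb σ (-b) by rw [horb2]; simp), horb2]
  have huntouched : ∀ i : ℤ, σ' i ≠ i → orb σ i = orb σ' i := by
    intro i hne
    apply orb_eq_of_agree_orbit fo fo'
    intro j hj
    have hjne : σ' j ≠ j := not_fixed_of_mem_orb hne hj
    exact hother j (fun h => hjne (h ▸ hfix)) (fun h => hjne (h ▸ hfixneg))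
      (fun h => hjne (h ▸ hfm)) (fun h => hjne (h ▸ hfnm))
  have hnt : ntOrbits σ = insert ({b, m} : Set ℤ) (insert ({-b, -m} : Set ℤ) (ntOrbits σ')) := by
    ext O
    constructor
    · rintro ⟨i, hi, rfl⟩
      show orb σ i ∈ _
      by_cases h1 : i = b
      · subst h1; rw [horb1]; exact Set.mem_insert _ _
      · by_cases h2 : i = m
        · subst h2; rw [horbm]; exact Set.mem_insert _ _
        · by_cases h3 : i = -b
          · subst h3; rw [horb2]; exact Set.mem_insert_of_mem _ (Set.mem_insert _ _)
          · by_cases h4 : i = -m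
            · subst h4; rw [horbnm]; exact Set.mem_insert_of_mem _ (Set.mem_insert _ _)
            · have hne : σ' i ≠ i := by rw [← hother i h1 h3 h2 h4]; exact hi
              rw [huntouched i hne]
              exact Set.mem_insert_of_mem _ (Set.mem_insert_of_mem _ ⟨i, hne, rfl⟩)
    · rintro (rfl | rfl | ⟨i, hi, rfl⟩)
      · exact ⟨b, by rw [happb]; omega, horb1.symm⟩
      · exact ⟨-b, by rw [happnb]; omega, horb2.symm⟩
      · have h1 : i ≠ b := fun h => hi (h ▸ hfix)
        have h2 : i ≠ -b := fun h => hi (h ▸ hfixneg)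
        have h3 : i ≠ m := fun h => hi (h ▸ hfm)
        have h4 : i ≠ -m := fun h => hi (h ▸ hfnm)
        refine ⟨i, by rw [hother i h1 h2 h3 h4]; exact hi, (huntouched i hi).symm⟩
  have hne1 : negSet ({b, m} : Set ℤ) ≠ ({b, m} : Set ℤ) := by
    rw [negSet_pair]
    intro h
    have hmem : (m:ℤ) ∈ ({-b, -m} : Set ℤ) := by rw [h]; simp
    simp only [Set.mem_insert_iff, Set.mem_singleton_iff] at hmem
    omega
  have hne2 : negSet ({-b, -m} : Set ℤ) ≠ ({-b, -m} : Set ℤ) := by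
    rw [negSet_pair]
    intro h
    have hmem : (-m:ℤ) ∈ ({- -b, - -m} : Set ℤ) := by rw [h]; simp
    simp only [Set.mem_insert_iff, Set.mem_singleton_iff, neg_neg] at hmem
    omega
  have hnm1 : ({b, m} : Set ℤ) ∉ ntOrbits σ' :=
    fun h => not_mem_of_fixed hfix h (Set.mem_insert _ _)
  have hnm2 : ({-b, -m} : Set ℤ) ∉ ntOrbits σ' :=
    fun h => not_mem_of_fixed hfixneg h (Set.mem_insert _ _)
  have hne12 : ({b, m} : Set ℤ) ≠ ({-b, -m} : Set ℤ) := by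
    intro h
    have hmem : (m:ℤ) ∈ ({-b, -m} : Set ℤ) := by rw [← h]; simp
    simp only [Set.mem_insert_iff, Set.mem_singleton_iff] at hmem
    omega
  have hpos : posOrbits σ
      = insert ({b, m} : Set ℤ) (insert ({-b, -m} : Set ℤ) (posOrbits σ')) := by
    rw [posOrbits, posOrbits, hnt]
    ext O
    simp only [Set.mem_setOf_eq, Set.mem_insert_iff]
    constructor
    · rintro ⟨rfl | rfl | hO, hne⟩
      · exact Or.inl rfl
      · exact Or.inr (Or.inl rfl)
      · exact Or.inr (Or.inr ⟨hO, hne⟩)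
    · rintro (rfl | rfl | ⟨hO, hne⟩)
      · exact ⟨Or.inl rfl, hne1⟩
      · exact ⟨Or.inr (Or.inl rfl), hne2⟩
      · exact ⟨Or.inr (Or.inr hO), hne⟩
  have hneg : negOrbits σ = negOrbits σ' := by
    rw [negOrbits, negOrbits, hnt]
    ext O
    simp only [Set.mem_setOf_eq, Set.mem_insert_iff]
    constructor
    · rintro ⟨rfl | rfl | hO, hne⟩
      · exact absurd hne hne1
      · exact absurd hne hne2
      · exact ⟨hO, hne⟩
    · rintro ⟨hO, hne⟩
      exact ⟨Or.inr (Or.inr hO), hne⟩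
  have hposfin' : (posOrbits σ').Finite :=
    (ntOrbits_finite (bset_supp_finite hσ)).subset (fun O hO => hO.1)
  have hnotmem2 : ({-b, -m} : Set ℤ) ∉ posOrbits σ' := fun h => hnm2 h.1
  have hnotmem1 : ({b, m} : Set ℤ) ∉ insert ({-b, -m} : Set ℤ) (posOrbits σ') := by
    rintro (h | h)
    · exact hne12 h
    · exact hnm1 h.1
  have hexp : expPlus σ = expPlus σ' + 1 := by
    rw [expPlus, expPlus, hpos, hneg,
      finsum_mem_insert _ hnotmem1 (hposfin'.insert _),
      finsum_mem_insert _ hnotmem2 hposfin']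
    rw [Set.ncard_pair (show b ≠ m by omega), Set.ncard_pair (show (-b:ℤ) ≠ -m by omega)]
    omega
  have hcount : negCount σ = negCount σ' := by rw [negCount, negCount, hneg]
  rw [phi, phi, hexp, hcount, pow_succ]
  ring

end PhiCases2
section PhiCases3
variable {n : ℕ} {σ' : Equiv.Perm ℤ}

local notation "m" => ((n:ℤ)+1)

lemma phi_ins_selfneg (hσ : σ' ∈ Bset n) {b : ℤ} (hb : b ≠ 0) (hbn : |b| ≤ (n:ℤ))
    (hmove : σ' b ≠ b) (hnegmem : -b ∈ orb σ' b) (qp qm : ℂ) :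
    phi qp qm (ins m σ' b) = qp * phi qp qm σ' := by
  have hm : (0:ℤ) < m := by positivity
  obtain ⟨hb1, hb2⟩ := abs_le.1 hbn
  have hbm : |b| ≤ m := by rw [abs_le]; omega
  set σ : Equiv.Perm ℤ := ins m σ' b with hσdef
  have hσm : σ ∈ Bset (n+1) := ins_mem_Bset hσ hb hbm
  have fo : IsOfFinOrder σ := bset_finOrder hσm
  have fo' : IsOfFinOrder σ' := bset_finOrder hσ
  have hfm : σ' m = m := hσ.2 _ (by rw [abs_of_pos hm]; omega)
  have hfnm : σ' (-m) = -m := hσ.2 _ (by rw [abs_neg, abs_of_pos hm]; omega)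
  have happb : σ b = m := ins_apply_b hσ hb
  have happm : σ m = σ' b := ins_apply_m hσ hb
  have happnb : σ (-b) = -m := ins_apply_negb hσ hb
  have happnm : σ (-m) = σ' (-b) := ins_apply_negm hσ hb
  have hother : ∀ i : ℤ, i ≠ b → i ≠ -b → i ≠ m → i ≠ -m → σ i = σ' i :=
    fun i h1 h2 h3 h4 => ins_apply_other hb h1 h2 h3 h4
  set O : Set ℤ := orb σ' b with hOdef
  have hOnt : O ∈ ntOrbits σ' := ⟨b, hmove, rfl⟩
  have hbO : b ∈ O := mem_orb_self σ' b
  have hσ'bO : σ' b ∈ O := apply_mem_orb hbO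
  have hσ'nbO : σ' (-b) ∈ O := apply_mem_orb hnegmem
  have hOfin : O.Finite := orb_finite (bset_supp_finite hσ) hmove
  have hmO : m ∉ O := not_mem_of_fixed hfm hOnt
  have hnmO : (-m : ℤ) ∉ O := not_mem_of_fixed hfnm hOnt
  have hOne : ∀ j ∈ O, σ' j ≠ j := fun j hj => not_fixed_of_mem_orb hmove hj
  have hnegO : negSet O = O := by
    rw [hOdef, negSet_orb hσ.1, orb_eq_of_mem hnegmem]
  -- the new orbit
  have horb : orb σ b = O ∪ ({m, -m} : Set ℤ) := by
    apply subset_antisymm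
    · apply orb_subset_of_inv fo (Set.mem_union_left _ hbO)
      rintro j (hj | hj)
      · by_cases h1 : j = b
        · subst h1; rw [happb]; right; simp
        · by_cases h2 : j = -b
          · subst h2; rw [happnb]; right; simp
          · have hjne := hOne j hj
            rw [hother j h1 h2 (fun h => hjne (h ▸ hfm)) (fun h => hjne (h ▸ hfnm))]
            exact Set.mem_union_left _ (apply_mem_orb hj)
      · rcases hj with rfl | hj
        · rw [happm]; exact Set.mem_union_left _ hσ'bO
        · rw [Set.mem_singleton_iff] at hj
          subst hj
          rw [happnm]; exact Set.mem_union_left _ hσ'nbO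
    · have hstep : orb σ' b ⊆ orb σ b := by
        apply subset_orb_of_step fo'
        intro j hj1 hj2
        have hjne : σ' j ≠ j := not_fixed_of_mem_orb hmove hj1
        by_cases h1 : j = b
        · rw [h1] at hj2 ⊢
          rw [show σ' b = σ (σ b) by rw [happb]; exact happm.symm]
          exact Equiv.Perm.sameCycle_apply_right.2 (Equiv.Perm.sameCycle_apply_right.2 hj2)
        · by_cases h2 : j = -b
          · rw [h2] at hj2 ⊢
            rw [show σ' (-b) = σ (σ (-b)) by rw [happnb]; exact happnm.symm]
            exact Equiv.Perm.sameCycle_apply_right.2 (Equiv.Perm.sameCycle_apply_right.2 hj2)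
          · rw [← hother j h1 h2 (fun h => hjne (h ▸ hfm)) (fun h => hjne (h ▸ hfnm))]
            exact Equiv.Perm.sameCycle_apply_right.2 hj2
      rintro j (hj | hj)
      · exact hstep hj
      · rcases hj with rfl | hj
        · rw [← happb]; exact apply_mem_orb (mem_orb_self σ b)
        · rw [Set.mem_singleton_iff] at hj
          subst hj
          rw [← happnb]; exact apply_mem_orb (hstep hnegmem)
  have huntouched : ∀ i : ℤ, σ' i ≠ i → i ∉ O → orb σ i = orb σ' i := by
    intro i hne hiO
    apply orb_eq_of_agree_orbit fo fo'
    intro j hj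
    have hjne : σ' j ≠ j := not_fixed_of_mem_orb hne hj
    refine hother j (fun h => hiO ?_) (fun h => hiO ?_)
      (fun h => hjne (h ▸ hfm)) (fun h => hjne (h ▸ hfnm))
    · rw [hOdef, orb_eq_of_mem (h ▸ hj)]; exact mem_orb_self σ' i
    · rw [hOdef, ← orb_eq_of_mem hnegmem, orb_eq_of_mem (h ▸ hj)]
      exact mem_orb_self σ' i
  have hnt : ntOrbits σ = insert (O ∪ ({m, -m} : Set ℤ)) (ntOrbits σ' \ {O}) := by
    ext O'
    constructor
    · rintro ⟨i, hi, rfl⟩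
      show orb σ i ∈ _
      by_cases hiO : i ∈ orb σ b
      · rw [orb_eq_of_mem hiO, horb]; exact Set.mem_insert _ _
      · have hI : i ∉ O := fun h => hiO (horb ▸ Set.mem_union_left _ h)
        have h1 : i ≠ b := fun h => hiO (h ▸ mem_orb_self σ b)
        have h2 : i ≠ -b := fun h => hI (h ▸ hnegmem)
        have h3 : i ≠ m := fun h => hiO (horb ▸ Set.mem_union_right _ (h ▸ by simp))
        have h4 : i ≠ -m := fun h => hiO (horb ▸ Set.mem_union_right _ (h ▸ by simp))
        have hne : σ' i ≠ i := by rw [← hother i h1 h2 h3 h4]; exact hi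
        rw [huntouched i hne hI]
        refine Set.mem_insert_of_mem _ ⟨⟨i, hne, rfl⟩, ?_⟩
        rw [Set.mem_singleton_iff]
        intro h
        exact hI (h ▸ mem_orb_self σ' i)
    · rintro (rfl | ⟨⟨i, hi, rfl⟩, hneq⟩)
      · exact ⟨b, by rw [happb]; omega, horb.symm⟩
      · rw [Set.mem_singleton_iff] at hneq
        have hiO : i ∉ O := fun h => hneq (show orb σ' i = O from orb_eq_of_mem h)
        have h1 : i ≠ b := fun h => hiO (h ▸ hbO)
        have h2 : i ≠ -b := fun h => hiO (h ▸ hnegmem)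
        have h3 : i ≠ m := fun h => hi (h ▸ hfm)
        have h4 : i ≠ -m := fun h => hi (h ▸ hfnm)
        exact ⟨i, by rw [hother i h1 h2 h3 h4]; exact hi, (huntouched i hi hiO).symm⟩
  have hnegnew : negSet (O ∪ ({m, -m} : Set ℤ)) = O ∪ ({m, -m} : Set ℤ) := by
    rw [negSet_union, hnegO, negSet_pair]
    have hp : ({-m, - -m} : Set ℤ) = ({m, -m} : Set ℤ) := by
      ext x; simp only [Set.mem_insert_iff, Set.mem_singleton_iff]; omega
    rw [hp]
  have hOnewnot : O ∪ ({m, -m} : Set ℤ) ∉ ntOrbits σ' \ {O} :=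
    fun h => not_mem_of_fixed hfm h.1 (Set.mem_union_right _ (by simp))
  have hOneg : O ∈ negOrbits σ' := ⟨hOnt, hnegO⟩
  have hpos : posOrbits σ = posOrbits σ' := by
    rw [posOrbits, posOrbits, hnt]
    ext O'
    simp only [Set.mem_setOf_eq, Set.mem_insert_iff]
    constructor
    · rintro ⟨rfl | hO', hne⟩
      · exact absurd hnegnew hne
      · exact ⟨hO'.1, hne⟩
    · rintro ⟨hO', hne⟩
      refine ⟨Or.inr ⟨hO', ?_⟩, hne⟩
      rw [Set.mem_singleton_iff]
      intro h
      exact hne (h ▸ hnegO)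
  have hneg : negOrbits σ = insert (O ∪ ({m, -m} : Set ℤ)) (negOrbits σ' \ {O}) := by
    rw [negOrbits, negOrbits, hnt]
    ext O'
    simp only [Set.mem_setOf_eq, Set.mem_insert_iff, Set.mem_diff, Set.mem_singleton_iff]
    constructor
    · rintro ⟨rfl | ⟨hO', hne2⟩, hne⟩
      · exact Or.inl rfl
      · exact Or.inr ⟨⟨hO', hne⟩, hne2⟩
    · rintro (rfl | ⟨⟨hO', hne⟩, hne2⟩)
      · exact ⟨Or.inl rfl, hnegnew⟩
      · exact ⟨Or.inr ⟨hO', hne2⟩, hne⟩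
  have hnegfin' : (negOrbits σ').Finite :=
    (ntOrbits_finite (bset_supp_finite hσ)).subset (fun O hO => hO.1)
  have hdifffin : ((negOrbits σ') \ {O}).Finite := hnegfin'.subset Set.diff_subset
  have hOnewnotneg : O ∪ ({m, -m} : Set ℤ) ∉ negOrbits σ' \ {O} :=
    fun h => hOnewnot ⟨h.1.1, h.2⟩
  have hcardO : 2 ≤ O.ncard := (Set.one_lt_ncard hOfin).2 ⟨σ' b, hσ'bO, b, hbO, hmove⟩
  have hcardnew : (O ∪ ({m, -m} : Set ℤ)).ncard = O.ncard + 2 := by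
    have h1 : O ∪ ({m, -m} : Set ℤ) = insert m (insert (-m) O) := by
      ext x
      simp only [Set.mem_union, Set.mem_insert_iff, Set.mem_singleton_iff]
      tauto
    rw [h1, Set.ncard_insert_of_notMem (by
        simp only [Set.mem_insert_iff]
        push_neg
        exact ⟨by omega, hmO⟩) (hOfin.insert _),
      Set.ncard_insert_of_notMem hnmO hOfin]
  have hexp : expPlus σ = expPlus σ' + 1 := by
    rw [expPlus, expPlus, hpos, hneg,
      finsum_mem_insert _ hOnewnotneg hdifffin,
      finsum_mem_remove hnegfin' hOneg (fun A => A.ncard / 2 - 1), hcardnew]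
    omega
  have hcount : negCount σ = negCount σ' := by
    rw [negCount, negCount, hneg, Set.ncard_insert_of_notMem hOnewnotneg hdifffin,
      ncard_remove hnegfin' hOneg]
  rw [phi, phi, hexp, hcount, pow_succ]
  ring

end PhiCases3
section PhiCases4
variable {n : ℕ} {σ' : Equiv.Perm ℤ}

local notation "m" => ((n:ℤ)+1)

lemma phi_ins_pospair (hσ : σ' ∈ Bset n) {b : ℤ} (hb : b ≠ 0) (hbn : |b| ≤ (n:ℤ))
    (hmove : σ' b ≠ b) (hnegnot : -b ∉ orb σ' b) (qp qm : ℂ) :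
    phi qp qm (ins m σ' b) = qp * phi qp qm σ' := by
  have hm : (0:ℤ) < m := by positivity
  obtain ⟨hb1, hb2⟩ := abs_le.1 hbn
  have hbm : |b| ≤ m := by rw [abs_le]; omega
  set σ : Equiv.Perm ℤ := ins m σ' b with hσdef
  have hσm : σ ∈ Bset (n+1) := ins_mem_Bset hσ hb hbm
  have fo : IsOfFinOrder σ := bset_finOrder hσm
  have fo' : IsOfFinOrder σ' := bset_finOrder hσ
  have hodd : ∀ i : ℤ, σ (-i) = -σ i := hσm.1
  have hfm : σ' m = m := hσ.2 _ (by rw [abs_of_pos hm]; omega)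
  have hfnm : σ' (-m) = -m := hσ.2 _ (by rw [abs_neg, abs_of_pos hm]; omega)
  have hmoveneg : σ' (-b) ≠ -b := by
    rw [hσ.1]
    intro h
    exact hmove (by omega)
  have happb : σ b = m := ins_apply_b hσ hb
  have happm : σ m = σ' b := ins_apply_m hσ hb
  have happnb : σ (-b) = -m := ins_apply_negb hσ hb
  have happnm : σ (-m) = σ' (-b) := ins_apply_negm hσ hb
  have hother : ∀ i : ℤ, i ≠ b → i ≠ -b → i ≠ m → i ≠ -m → σ i = σ' i :=
    fun i h1 h2 h3 h4 => ins_apply_other hb h1 h2 h3 h4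
  set O : Set ℤ := orb σ' b with hOdef
  set Ob : Set ℤ := orb σ' (-b) with hObdef
  have hOnt : O ∈ ntOrbits σ' := ⟨b, hmove, rfl⟩
  have hObnt : Ob ∈ ntOrbits σ' := ⟨-b, hmoveneg, rfl⟩
  have hbO : b ∈ O := mem_orb_self σ' b
  have hnbOb : -b ∈ Ob := mem_orb_self σ' (-b)
  have hσ'bO : σ' b ∈ O := apply_mem_orb hbO
  have hOfin : O.Finite := orb_finite (bset_supp_finite hσ) hmove
  have hObfin : Ob.Finite := orb_finite (bset_supp_finite hσ) hmoveneg
  have hmO : m ∉ O := not_mem_of_fixed hfm hOnt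
  have hnmO : (-m : ℤ) ∉ O := not_mem_of_fixed hfnm hOnt
  have hmOb : m ∉ Ob := not_mem_of_fixed hfm hObnt
  have hnmOb : (-m : ℤ) ∉ Ob := not_mem_of_fixed hfnm hObnt
  have hnegO : negSet O = Ob := negSet_orb hσ.1 b
  have hnegOb : negSet Ob = O := by
    rw [← hnegO, negSet_negSet]
  have hbnotOb : b ∉ Ob := by
    intro h
    refine hnegnot ?_
    rw [hOdef] at hnegnot ⊢
    rw [orb_eq_of_mem h]
    exact hnbOb
  have hOneOb : O ≠ Ob := fun h => hnegnot (h ▸ hnbOb)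
  -- new orbits
  have horb1 : orb σ b = O ∪ ({m} : Set ℤ) := by
    apply subset_antisymm
    · apply orb_subset_of_inv fo (Set.mem_union_left _ hbO)
      rintro j (hj | hj)
      · by_cases h1 : j = b
        · rw [h1, happb]; right; simp
        · have hjne := not_fixed_of_mem_orb hmove hj
          have h2 : j ≠ -b := fun h => hnegnot (h ▸ hj)
          rw [hother j h1 h2 (fun h => hjne (h ▸ hfm)) (fun h => hjne (h ▸ hfnm))]
          exact Set.mem_union_left _ (apply_mem_orb hj)
      · rw [Set.mem_singleton_iff] at hj
        rw [hj, happm]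
        exact Set.mem_union_left _ hσ'bO
    · have hstep : orb σ' b ⊆ orb σ b := by
        apply subset_orb_of_step fo'
        intro j hj1 hj2
        have hjne : σ' j ≠ j := not_fixed_of_mem_orb hmove hj1
        by_cases h1 : j = b
        · rw [h1] at hj2 ⊢
          rw [show σ' b = σ (σ b) by rw [happb]; exact happm.symm]
          exact Equiv.Perm.sameCycle_apply_right.2 (Equiv.Perm.sameCycle_apply_right.2 hj2)
        · have h2 : j ≠ -b := fun h => hnegnot (h ▸ hj1)
          rw [← hother j h1 h2 (fun h => hjne (h ▸ hfm)) (fun h => hjne (h ▸ hfnm))]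
          exact Equiv.Perm.sameCycle_apply_right.2 hj2
      rintro j (hj | hj)
      · exact hstep hj
      · rw [Set.mem_singleton_iff] at hj
        rw [hj, ← happb]
        exact apply_mem_orb (mem_orb_self σ b)
  have horb2 : orb σ (-b) = Ob ∪ ({-m} : Set ℤ) := by
    rw [← negSet_orb hodd, horb1, negSet_union, hnegO, negSet_singleton]
  have huntouched : ∀ i : ℤ, σ' i ≠ i → i ∉ O → i ∉ Ob → orb σ i = orb σ' i := by
    intro i hne hiO hiOb
    apply orb_eq_of_agree_orbit fo fo'
    intro j hj
    have hjne : σ' j ≠ j := not_fixed_of_mem_orb hne hj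
    refine hother j (fun h => hiO ?_) (fun h => hiOb ?_)
      (fun h => hjne (h ▸ hfm)) (fun h => hjne (h ▸ hfnm))
    · rw [hOdef, orb_eq_of_mem (h ▸ hj)]; exact mem_orb_self σ' i
    · rw [hObdef, orb_eq_of_mem (h ▸ hj)]; exact mem_orb_self σ' i
  have hnt : ntOrbits σ
      = insert (O ∪ ({m} : Set ℤ)) (insert (Ob ∪ ({-m} : Set ℤ))
          ((ntOrbits σ' \ {O}) \ {Ob})) := by
    ext O'
    constructor
    · rintro ⟨i, hi, rfl⟩
      show orb σ i ∈ _
      by_cases hiO : i ∈ orb σ b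
      · rw [orb_eq_of_mem hiO, horb1]; exact Set.mem_insert _ _
      · by_cases hiOb : i ∈ orb σ (-b)
        · rw [orb_eq_of_mem hiOb, horb2]
          exact Set.mem_insert_of_mem _ (Set.mem_insert _ _)
        · have hI : i ∉ O := fun h => hiO (horb1 ▸ Set.mem_union_left _ h)
          have hIb : i ∉ Ob := fun h => hiOb (horb2 ▸ Set.mem_union_left _ h)
          have h1 : i ≠ b := fun h => hiO (h ▸ mem_orb_self σ b)
          have h2 : i ≠ -b := fun h => hiOb (h ▸ mem_orb_self σ (-b))
          have h3 : i ≠ m := fun h => hiO (horb1 ▸ Set.mem_union_right _ (h ▸ rfl))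
          have h4 : i ≠ -m := fun h => hiOb (horb2 ▸ Set.mem_union_right _ (h ▸ rfl))
          have hne : σ' i ≠ i := by rw [← hother i h1 h2 h3 h4]; exact hi
          rw [huntouched i hne hI hIb]
          refine Set.mem_insert_of_mem _ (Set.mem_insert_of_mem _ ⟨⟨⟨i, hne, rfl⟩, ?_⟩, ?_⟩)
          · rw [Set.mem_singleton_iff]
            exact fun h => hI (h ▸ mem_orb_self σ' i)
          · rw [Set.mem_singleton_iff]
            exact fun h => hIb (h ▸ mem_orb_self σ' i)
    · rintro (rfl | rfl | ⟨⟨⟨i, hi, rfl⟩, hneq1⟩, hneq2⟩)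
      · exact ⟨b, by rw [happb]; omega, horb1.symm⟩
      · exact ⟨-b, by rw [happnb]; omega, horb2.symm⟩
      · rw [Set.mem_singleton_iff] at hneq1 hneq2
        have hiO : i ∉ O := fun h => hneq1 (orb_eq_of_mem h)
        have hiOb : i ∉ Ob := fun h => hneq2 (orb_eq_of_mem h)
        have h1 : i ≠ b := fun h => hiO (h ▸ hbO)
        have h2 : i ≠ -b := fun h => hiOb (h ▸ hnbOb)
        have h3 : i ≠ m := fun h => hi (h ▸ hfm)
        have h4 : i ≠ -m := fun h => hi (h ▸ hfnm)
        exact ⟨i, by rw [hother i h1 h2 h3 h4]; exact hi, (huntouched i hi hiO hiOb).symm⟩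
  have hnegnew1 : negSet (O ∪ ({m} : Set ℤ)) = Ob ∪ ({-m} : Set ℤ) := by
    rw [negSet_union, hnegO, negSet_singleton]
  have hnegnew2 : negSet (Ob ∪ ({-m} : Set ℤ)) = O ∪ ({m} : Set ℤ) := by
    rw [negSet_union, hnegOb, negSet_singleton, neg_neg]
  have hnew1neq : O ∪ ({m} : Set ℤ) ≠ Ob ∪ ({-m} : Set ℤ) := by
    intro h
    have : (m : ℤ) ∈ Ob ∪ ({-m} : Set ℤ) := h ▸ Set.mem_union_right _ rfl
    rcases this with h' | h'
    · exact hmOb h'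
    · rw [Set.mem_singleton_iff] at h'; omega
  have hposnew1 : negSet (O ∪ ({m} : Set ℤ)) ≠ O ∪ ({m} : Set ℤ) := by
    rw [hnegnew1]; exact fun h => hnew1neq h.symm
  have hposnew2 : negSet (Ob ∪ ({-m} : Set ℤ)) ≠ Ob ∪ ({-m} : Set ℤ) := by
    rw [hnegnew2]; exact hnew1neq
  have hposO : negSet O ≠ O := by rw [hnegO]; exact hOneOb.symm
  have hposOb : negSet Ob ≠ Ob := by rw [hnegOb]; exact hOneOb
  have hOpos : O ∈ posOrbits σ' := ⟨hOnt, hposO⟩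
  have hObpos : Ob ∈ posOrbits σ' := ⟨hObnt, hposOb⟩
  have hpos : posOrbits σ
      = insert (O ∪ ({m} : Set ℤ)) (insert (Ob ∪ ({-m} : Set ℤ))
          ((posOrbits σ' \ {O}) \ {Ob})) := by
    rw [posOrbits, posOrbits, hnt]
    ext O'
    simp only [Set.mem_setOf_eq, Set.mem_insert_iff, Set.mem_diff, Set.mem_singleton_iff]
    constructor
    · rintro ⟨rfl | rfl | ⟨⟨hO', hne1⟩, hne2⟩, hne⟩
      · exact Or.inl rfl
      · exact Or.inr (Or.inl rfl)
      · exact Or.inr (Or.inr ⟨⟨⟨hO', hne⟩, hne1⟩, hne2⟩)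
    · rintro (rfl | rfl | ⟨⟨⟨hO', hne⟩, hne1⟩, hne2⟩)
      · exact ⟨Or.inl rfl, hposnew1⟩
      · exact ⟨Or.inr (Or.inl rfl), hposnew2⟩
      · exact ⟨Or.inr (Or.inr ⟨⟨hO', hne1⟩, hne2⟩), hne⟩
  have hneg : negOrbits σ = negOrbits σ' := by
    rw [negOrbits, negOrbits, hnt]
    ext O'
    simp only [Set.mem_setOf_eq, Set.mem_insert_iff, Set.mem_diff, Set.mem_singleton_iff]
    constructor
    · rintro ⟨rfl | rfl | ⟨⟨hO', hne1⟩, hne2⟩, hne⟩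
      · exact absurd hne hposnew1
      · exact absurd hne hposnew2
      · exact ⟨hO', hne⟩
    · rintro ⟨hO', hne⟩
      refine ⟨Or.inr (Or.inr ⟨⟨hO', ?_⟩, ?_⟩), hne⟩
      · exact fun h => hposO (h ▸ hne)
      · exact fun h => hposOb (h ▸ hne)
  have hposfin' : (posOrbits σ').Finite :=
    (ntOrbits_finite (bset_supp_finite hσ)).subset (fun A hA => hA.1)
  have hd1fin : ((posOrbits σ' \ {O}) \ {Ob}).Finite :=
    (hposfin'.subset Set.diff_subset).subset Set.diff_subset
  have hObmem : Ob ∈ posOrbits σ' \ {O} := ⟨hObpos, by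
    rw [Set.mem_singleton_iff]; exact hOneOb.symm⟩
  have hnot2 : Ob ∪ ({-m} : Set ℤ) ∉ (posOrbits σ' \ {O}) \ {Ob} := by
    rintro ⟨⟨h, -⟩, -⟩
    exact not_mem_of_fixed hfnm h.1 (Set.mem_union_right _ rfl)
  have hnot1 : O ∪ ({m} : Set ℤ)
      ∉ insert (Ob ∪ ({-m} : Set ℤ)) ((posOrbits σ' \ {O}) \ {Ob}) := by
    rintro (h | ⟨⟨h, -⟩, -⟩)
    · exact hnew1neq h
    · exact not_mem_of_fixed hfm h.1 (Set.mem_union_right _ rfl)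
  have hcard1 : (O ∪ ({m} : Set ℤ)).ncard = O.ncard + 1 := by
    rw [Set.union_singleton, Set.ncard_insert_of_notMem hmO hOfin]
  have hcard2 : (Ob ∪ ({-m} : Set ℤ)).ncard = Ob.ncard + 1 := by
    rw [Set.union_singleton, Set.ncard_insert_of_notMem hnmOb hObfin]
  have hOpos1 : 1 ≤ O.ncard := (Set.ncard_pos hOfin).2 ⟨b, hbO⟩
  have hObpos1 : 1 ≤ Ob.ncard := (Set.ncard_pos hObfin).2 ⟨-b, hnbOb⟩
  have hexp : expPlus σ = expPlus σ' + 1 := by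
    rw [expPlus, expPlus, hpos, hneg,
      finsum_mem_insert _ hnot1 (hd1fin.insert _),
      finsum_mem_insert _ hnot2 hd1fin,
      finsum_mem_remove hposfin' hOpos (fun A => A.ncard - 1),
      finsum_mem_remove (hposfin'.subset Set.diff_subset) hObmem (fun A => A.ncard - 1),
      hcard1, hcard2]
    omega
  have hcount : negCount σ = negCount σ' := by rw [negCount, negCount, hneg]
  rw [phi, phi, hexp, hcount, pow_succ]
  ring

end PhiCases4
section SumPhi

lemma mem_bset_zero {σ : Equiv.Perm ℤ} : σ ∈ Bset 0 ↔ σ = 1 := by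
  constructor
  · intro h
    ext i
    by_cases hi : i = 0
    · subst hi; rw [bset_zero h]; rfl
    · rw [h.2 i (by simpa using abs_pos.2 hi)]; rfl
  · rintro rfl
    exact ⟨fun i => by simp, fun i _ => rfl⟩

lemma phi_ins_full {n : ℕ} {σ' : Equiv.Perm ℤ} (hσ : σ' ∈ Bset n) {b : ℤ}
    (hb : b ≠ 0) (hbm : |b| ≤ (n:ℤ)+1) (qp qm : ℂ) :
    phi qp qm (ins ((n:ℤ)+1) σ' b)
      = (if b = (n:ℤ)+1 then 1 else if b = -((n:ℤ)+1) then qm else qp) * phi qp qm σ' := by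
  by_cases h1 : b = (n:ℤ)+1
  · rw [if_pos h1, h1, phi_ins_m, one_mul]
  · by_cases h2 : b = -((n:ℤ)+1)
    · rw [if_neg h1, if_pos h2, h2, phi_ins_negm hσ]
    · rw [if_neg h1, if_neg h2]
      have hbn : |b| ≤ (n:ℤ) := by
        rw [abs_le] at hbm ⊢; omega
      by_cases h3 : σ' b = b
      · exact phi_ins_fix hσ hb hbn h3 qp qm
      · by_cases h4 : -b ∈ orb σ' b
        · exact phi_ins_selfneg hσ hb hbn h3 h4 qp qm
        · exact phi_ins_pospair hσ hb hbn h3 h4 qp qm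

lemma sum_phi (qp qm : ℂ) :
    ∀ n : ℕ, ∑ σ ∈ (bset_finite n).toFinset, phi qp qm σ
      = ∏ k ∈ Finset.range n, (1 + 2 * (k:ℂ) * qp + qm) := by
  intro n
  induction n with
  | zero =>
      have h1 : (bset_finite 0).toFinset = {(1 : Equiv.Perm ℤ)} := by
        ext σ
        simp [Set.Finite.mem_toFinset, mem_bset_zero]
      rw [h1, Finset.sum_singleton, phi_one, Finset.range_zero, Finset.prod_empty]
  | succ n ih =>
      set m : ℤ := (n:ℤ)+1 with hmdef
      set I : Finset ℤ := (Finset.Icc (-m) m).erase 0 with hIdef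
      have hmemI : ∀ b : ℤ, b ∈ I ↔ (b ≠ 0 ∧ |b| ≤ m) := by
        intro b
        rw [hIdef, Finset.mem_erase, Finset.mem_Icc, abs_le]
      have hbij : ∑ σ ∈ (bset_finite (n+1)).toFinset, phi qp qm σ
          = ∑ p ∈ (bset_finite n).toFinset ×ˢ I, phi qp qm (ins m p.1 p.2) := by
        apply Finset.sum_nbij' (i := fun σ => (σ * tt m (σ⁻¹ m), σ⁻¹ m))
          (j := fun p => ins m p.1 p.2)
        · intro σ hσ
          rw [Set.Finite.mem_toFinset] at hσ
          rw [Finset.mem_product, Set.Finite.mem_toFinset]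
          exact ⟨del_mem_Bset hσ, (hmemI _).2 ⟨del_b_ne_zero hσ, del_b_abs_le hσ⟩⟩
        · intro p hp
          rw [Finset.mem_product, Set.Finite.mem_toFinset] at hp
          rw [Set.Finite.mem_toFinset]
          obtain ⟨hb0, hbm⟩ := (hmemI _).1 hp.2
          exact ins_mem_Bset hp.1 hb0 hbm
        · intro σ hσ
          rw [Set.Finite.mem_toFinset] at hσ
          exact ins_del hσ
        · intro p hp
          rw [Finset.mem_product, Set.Finite.mem_toFinset] at hp
          obtain ⟨hb0, hbm⟩ := (hmemI _).1 hp.2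
          have h1 : (ins m p.1 p.2)⁻¹ m = p.2 := ins_inv_m hp.1 hb0
          refine Prod.ext ?_ h1
          rw [h1, del_ins hb0]
        · intro σ hσ
          rw [Set.Finite.mem_toFinset] at hσ
          rw [ins_del hσ]
      rw [hbij, Finset.sum_product]
      have hsummand : ∀ σ' ∈ (bset_finite n).toFinset,
          ∑ b ∈ I, phi qp qm (ins m σ' b)
            = (1 + qm + (2*n : ℂ) * qp) * phi qp qm σ' := by
        intro σ' hσ'
        rw [Set.Finite.mem_toFinset] at hσ'
        have hstep : ∑ b ∈ I, phi qp qm (ins m σ' b)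
            = ∑ b ∈ I, (if b = m then 1 else if b = -m then qm else qp) * phi qp qm σ' := by
          apply Finset.sum_congr rfl
          intro b hb
          obtain ⟨hb0, hbm⟩ := (hmemI b).1 hb
          exact phi_ins_full hσ' hb0 hbm qp qm
        rw [hstep, ← Finset.sum_mul]
        congr 1
        have hmI : m ∈ I := (hmemI m).2 ⟨by omega, by rw [abs_of_pos (by positivity)]⟩
        have hnmI : -m ∈ I.erase m := by
          rw [Finset.mem_erase]
          exact ⟨by omega, (hmemI (-m)).2 ⟨by omega, by rw [abs_neg, abs_of_pos (by positivity)]⟩⟩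
        rw [← Finset.add_sum_erase _ _ hmI, if_pos rfl]
        rw [← Finset.add_sum_erase _ _ hnmI, if_neg (by
          have := Finset.mem_erase.1 hnmI
          omega), if_pos rfl]
        have hconst : ∀ b ∈ (I.erase m).erase (-m),
            (if b = m then (1:ℂ) else if b = -m then qm else qp) = qp := by
          intro b hb
          rw [Finset.mem_erase, Finset.mem_erase] at hb
          rw [if_neg hb.2.1, if_neg hb.1]
        rw [Finset.sum_congr rfl hconst, Finset.sum_const]
        have hcard : ((I.erase m).erase (-m)).card = 2*n := by
          have hc1 : (Finset.Icc (-m) m).card = 2*n + 3 := by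
            rw [Int.card_Icc]
            omega
          have h0mem : (0:ℤ) ∈ Finset.Icc (-m) m := by
            rw [Finset.mem_Icc]; omega
          rw [Finset.card_erase_of_mem hnmI, Finset.card_erase_of_mem hmI, hIdef,
            Finset.card_erase_of_mem h0mem, hc1]
          omega
        rw [hcard, nsmul_eq_mul]
        push_cast
        ring
      rw [Finset.sum_congr rfl hsummand, ← Finset.mul_sum, ih, Finset.prod_range_succ]
      push_cast
      ring

end SumPhi

section Analytic
variable {α : Type*} [DecidableEq α] {n : ℕ}

lemma permRestrict_eq {σ : Equiv.Perm ℤ} (hσ : σ ∈ Bset n) :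
    permRestrict n σ = Equiv.Perm.subtypePerm σ (fun i => (bset_cond hσ i).symm) := by
  rw [permRestrict, dif_pos (bset_cond hσ)]

lemma inner00_zero_left (G : Ksp α n) : inner00 0 G = 0 := by
  simp [inner00]

lemma inner00_single_left (v : SIdx n → α) (c : ℂ) (G : Ksp α n) :
    inner00 (Finsupp.single v c) G = (starRingEnd ℂ) c * G v :=
  Finsupp.sum_single_index (by simp)

lemma inner00_add_left (F₁ F₂ G : Ksp α n) :
    inner00 (F₁ + F₂) G = inner00 F₁ G + inner00 F₂ G :=
  Finsupp.sum_add_index' (fun v => by simp) (fun v c₁ c₂ => by rw [map_add, add_mul])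

lemma inner00_sum_left {ι : Type*} (s : Finset ι) (F : ι → Ksp α n) (G : Ksp α n) :
    inner00 (∑ i ∈ s, F i) G = ∑ i ∈ s, inner00 (F i) G := by
  classical
  induction s using Finset.induction_on with
  | empty => simp [inner00_zero_left]
  | insert _ _ h ih =>
      rw [Finset.sum_insert h, Finset.sum_insert h, inner00_add_left, ih]

lemma inner00_zero_right (F : Ksp α n) : inner00 F 0 = 0 := by
  simp [inner00]

lemma inner00_add_right (F G₁ G₂ : Ksp α n) :
    inner00 F (G₁ + G₂) = inner00 F G₁ + inner00 F G₂ := by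
  simp only [inner00, Finsupp.add_apply, mul_add]
  exact Finsupp.sum_add

lemma inner00_smul_right (c : ℂ) (F G : Ksp α n) :
    inner00 F (c • G) = c * inner00 F G := by
  rw [inner00, inner00, Finsupp.sum, Finsupp.sum, Finset.mul_sum]
  exact Finset.sum_congr rfl (fun v _ => by rw [Finsupp.smul_apply, smul_eq_mul]; ring)

lemma inner00_sum_right {ι : Type*} (s : Finset ι) (F : Ksp α n) (G : ι → Ksp α n) :
    inner00 F (∑ i ∈ s, G i) = ∑ i ∈ s, inner00 F (G i) := by
  classical
  induction s using Finset.induction_on with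
  | empty => simp [inner00_zero_right]
  | insert _ _ h ih =>
      rw [Finset.sum_insert h, Finset.sum_insert h, inner00_add_right, ih]

lemma act_tpow {σ : Equiv.Perm ℤ} (hσ : σ ∈ Bset n) (x : Hsp α) :
    act α n σ (tpow α x n) = tpow α x n := by
  rw [tpow, map_sum]
  simp only [act, Finsupp.lmapDomain_apply, Finsupp.mapDomain_single]
  refine Finset.sum_nbij' (i := fun v => v ∘ (permRestrict n σ))
    (j := fun w => w ∘ (permRestrict n σ).symm) ?_ ?_ ?_ ?_ ?_
  · intro v hv
    rw [Fintype.mem_piFinset] at hv ⊢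
    exact fun i => hv _
  · intro w hw
    rw [Fintype.mem_piFinset] at hw ⊢
    exact fun i => hw _
  · intro v _
    funext j
    simp [Function.comp]
  · intro w _
    funext j
    simp [Function.comp]
  · intro v _
    congr 1
    exact (Equiv.prod_comp (permRestrict n σ) (fun j => x (v j))).symm

lemma tpow_sum_apply (x : Hsp α) (v₀ : SIdx n → α)
    (hv : v₀ ∈ Fintype.piFinset (fun _ : SIdx n => x.support)) :
    tpow α x n v₀ = ∏ i : SIdx n, x (v₀ i) := by
  rw [tpow, Finsupp.finset_sum_apply, Finset.sum_eq_single v₀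
    (fun w _ hw => Finsupp.single_eq_of_ne' hw) (fun h => absurd hv h)]
  exact Finsupp.single_eq_same

lemma inner00_tpow_tpow (x : α →₀ ℝ) (hx : (x.sum fun _ c => c ^ 2) = 1) :
    inner00 (tpow α (cplx x) n) (tpow α (cplx x) n) = 1 := by
  have hsupp : (cplx x).support = x.support :=
    Finsupp.support_mapRange_of_injective (by simp) x Complex.ofReal_injective
  have happ : ∀ a, (cplx x) a = ((x a : ℝ) : ℂ) := fun a => rfl
  nth_rewrite 1 [tpow]
  rw [inner00_sum_left]
  have hterm : ∀ v ∈ Fintype.piFinset (fun _ : SIdx n => (cplx x).support),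
      inner00 (Finsupp.single v (∏ i : SIdx n, (cplx x) (v i))) (tpow α (cplx x) n)
        = ∏ i : SIdx n, ((x (v i) : ℂ)) ^ 2 := by
    intro v hv
    rw [inner00_single_left, tpow_sum_apply _ _ hv]
    rw [map_prod]
    rw [← Finset.prod_mul_distrib]
    refine Finset.prod_congr rfl (fun i _ => ?_)
    rw [happ, Complex.conj_ofReal, sq]
  have hps : (∏ _i : SIdx n, (∑ a ∈ (cplx x).support, ((x a : ℂ)) ^ 2))
      = ∑ v ∈ Fintype.piFinset (fun _ : SIdx n => (cplx x).support),
          ∏ i : SIdx n, ((x (v i) : ℂ)) ^ 2 :=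
    Finset.prod_univ_sum (fun _ : SIdx n => (cplx x).support) (fun _ a => ((x a : ℂ)) ^ 2)
  rw [Finset.sum_congr rfl hterm, ← hps]
  have hinner : ∑ a ∈ (cplx x).support, ((x a : ℂ)) ^ 2 = 1 := by
    rw [hsupp]
    have : ∑ a ∈ x.support, ((x a : ℂ)) ^ 2 = (((∑ a ∈ x.support, (x a) ^ 2 : ℝ)) : ℂ) := by
      push_cast
      rfl
    rw [this]
    rw [show ∑ a ∈ x.support, (x a) ^ 2 = (x.sum fun _ c => c ^ 2) from rfl, hx]
    norm_num
  rw [Finset.prod_congr rfl (fun i _ => hinner), Finset.prod_const_one]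

lemma Pop_eq (n : ℕ) (qp qm : ℂ) :
    Pop α n qp qm = ∑ σ ∈ (bset_finite n).toFinset, phi qp qm σ • act α n σ := by
  rw [Pop, finsum_mem_eq_finite_toFinset_sum _ (bset_finite n)]

end Analytic


/-- for a unit vector x ∈ H_ℝ and all complex parameters q₊,q₋,
⟨x^{⊗2n}, P^{(n)}_{q₊,q₋} x^{⊗2n}⟩₀,₀ = ∏_{k=0}^{n−1} (1 + 2k·q₊ + q₋). -/
theorem symmetrizer_norm_tensor_power (α : Type*) [DecidableEq α] (qp qm : ℂ)
    (x : α →₀ ℝ) (hx : (x.sum fun _ c => c ^ 2) = 1) (n : ℕ) :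
    inner00 (tpow α (cplx x) n) (Pop α n qp qm (tpow α (cplx x) n))
      = ∏ k ∈ Finset.range n, (1 + 2 * (k : ℂ) * qp + qm) := by
  rw [Pop_eq, LinearMap.sum_apply, inner00_sum_right]
  have hterm : ∀ σ ∈ (bset_finite n).toFinset,
      inner00 (tpow α (cplx x) n) ((phi qp qm σ • act α n σ) (tpow α (cplx x) n))
        = phi qp qm σ := by
    intro σ hσm
    rw [Set.Finite.mem_toFinset] at hσm
    rw [LinearMap.smul_apply, inner00_smul_right, act_tpow hσm,
      inner00_tpow_tpow x hx, mul_one]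
  rw [Finset.sum_congr rfl hterm, sum_phi]


end TypeB
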